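/- Suppose K satisfies hypotheses (H) and let M be a K-ℵ₁-saturated L-structure. Let A be a countable subset of M and let c be an element of M not belonging to the substructure of M generated by A. Then for every L-formula φ(x, ȳ) and every finite tuple ā from the substructure generated by A such that M ⊨ φ(c, ā), the set {b ∈ M : M ⊨ φ(b, ā)} is infinite. (Hence the algebraic closure and the definable closure of A in M both equal the substructure generated by A.) -/

import Mathlib

open FirstOrder FirstOrder.Language CategoryTheory Cardinal Set

namespace FraisseFreeAmalg

variable (L : FirstOrder.Language.{0, 0})

/-- The class is closed under isomorphism. -/
def IsoClosed (K : Set (Bundled.{0} L.Structure)) : Prop :=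
  ∀ A ∈ K, ∀ B : Bundled.{0} L.Structure, Nonempty (A ≃[L] B) → B ∈ K

/-- All members of the class are finite or countably infinite. -/
def SmallMembers (K : Set (Bundled.{0} L.Structure)) : Prop :=
  ∀ A ∈ K, Countable A

/-- Condition (1) of (H): universal axiomatizability. -/
def UnivAx (K : Set (Bundled.{0} L.Structure)) : Prop :=
  ∀ A : Bundled.{0} L.Structure, Countable A → A ∉ K →
    ∃ (n : ℕ) (φ : L.Formula (Fin n)) (a : Fin n → A),
      φ.IsQF ∧ φ.Realize a ∧ ∀ B ∈ K, ∀ b : Fin n → B, ¬ φ.Realize b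

/-- Condition (2) of (H): quantifier elimination. -/
def QElim (K : Set (Bundled.{0} L.Structure)) : Prop :=
  ∀ (m n : ℕ) (φ : L.Formula (Fin m ⊕ Fin n)), φ.IsQF →
    ∀ A ∈ K, ∀ (a : Fin m → A) (b : Fin n → A), φ.Realize (Sum.elim a b) →
      ∃ ψ : L.Formula (Fin m), ψ.IsQF ∧ ψ.Realize a ∧
        ∀ A' ∈ K, ∀ a' : Fin m → A', ψ.Realize a' →
          ∃ B' ∈ K, ∃ (i : A' ↪[L] B') (b' : Fin n → B'),
            φ.Realize (Sum.elim (fun k => i (a' k)) b')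

/-- `D` together with `iA, iB` is a free amalgam of `A` and `B` over `C` in the class `K`. -/
def IsFreeAmalgam (K : Set (Bundled.{0} L.Structure))
    (C A B : Bundled.{0} L.Structure) (cA : C ↪[L] A) (cB : C ↪[L] B)
    (D : Bundled.{0} L.Structure) (iA : A ↪[L] D) (iB : B ↪[L] D) : Prop :=
  (∀ c : C, iA (cA c) = iB (cB c)) ∧
  (Set.range iA ∩ Set.range iB = Set.range fun c : C => iA (cA c)) ∧
  Substructure.closure L (Set.range iA ∪ Set.range iB) = ⊤ ∧
  ∀ D' ∈ K, ∀ (φA : A →[L] D') (φB : B →[L] D'),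
    (∀ c : C, φA (cA c) = φB (cB c)) →
    ∃! φ : D →[L] D',
      (∀ a : A, φ (iA a) = φA a) ∧ (∀ b : B, φ (iB b) = φB b)

/-- Condition (3) of (H): free amalgamation (together with agreement on the
substructures generated by the constants). -/
def FreeAmalg (K : Set (Bundled.{0} L.Structure)) : Prop :=
  (∀ A ∈ K, ∀ B ∈ K,
      Nonempty ((⊥ : L.Substructure A) ≃[L] (⊥ : L.Substructure B))) ∧
  ∀ (C A B : Bundled.{0} L.Structure), C ∈ K → A ∈ K → B ∈ K →
    ∀ (cA : C ↪[L] A) (cB : C ↪[L] B),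
      ∃ D ∈ K, ∃ (iA : A ↪[L] D) (iB : B ↪[L] D),
        IsFreeAmalgam L K C A B cA cB D iA iB

/-- Condition (4) of (H): generic element. -/
def GenericElem (K : Set (Bundled.{0} L.Structure)) : Prop :=
  ∃ X ∈ K, ∃ x : X, Substructure.closure L ({x} : Set X) = ⊤ ∧
    ∀ A ∈ K, ∀ a : A, ∃ φ : X →[L] A, φ x = a

/-- Condition (5) of (H): algebraically independent 3-amalgamation. -/
def ThreeAmalg (K : Set (Bundled.{0} L.Structure)) : Prop :=
  ∀ (E A B : Bundled.{0} L.Structure) (Bb Dd : Fin 2 → Bundled.{0} L.Structure),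
    E ∈ K → A ∈ K → B ∈ K → (∀ i, Bb i ∈ K) → (∀ i, Dd i ∈ K) →
    ∀ (eA : E ↪[L] A) (eB : ∀ i, E ↪[L] Bb i)
      (aD : ∀ i, A ↪[L] Dd i) (bD : ∀ i, Bb i ↪[L] Dd i)
      (bB : ∀ i, Bb i ↪[L] B),
      (∀ i, ∀ e : E, aD i (eA e) = bD i (eB i e)) →
      (∀ e : E, bB 0 (eB 0 e) = bB 1 (eB 1 e)) →
      (∀ i, Set.range (aD i) ∩ Set.range (bD i) =
        Set.range fun e : E => aD i (eA e)) →
      (Set.range (bB 0) ∩ Set.range (bB 1) =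
        Set.range fun e : E => bB 0 (eB 0 e)) →
      ∃ D ∈ K, ∃ (dD : ∀ i, Dd i ↪[L] D) (jB : B ↪[L] D),
        (∀ i, ∀ b : Bb i, dD i (bD i b) = jB (bB i b)) ∧
        (∀ a : A, dD 0 (aD 0 a) = dD 1 (aD 1 a)) ∧
        (∀ i, Set.range (dD i) ∩ Set.range jB =
          Set.range fun b : Bb i => dD i (bD i b)) ∧
        (Set.range (dD 0) ∩ Set.range (dD 1) =
          Set.range fun a : A => dD 0 (aD 0 a))

/-- The hypotheses (H) on the class `K`. -/
structure HypH (K : Set (Bundled.{0} L.Structure)) : Prop where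
  small : SmallMembers L K
  isoClosed : IsoClosed L K
  univAx : UnivAx L K
  qElim : QElim L K
  freeAmalg : FreeAmalg L K
  generic : GenericElem L K
  threeAmalg : ThreeAmalg L K

/-- `M` is `K`-ℵ₁-saturated. -/
def KSat (K : Set (Bundled.{0} L.Structure)) (M : Type) [L.Structure M] : Prop :=
  (∀ S : L.Substructure M, Cardinal.mk S < Cardinal.aleph 1 → (Bundled.of (↥S) : Bundled L.Structure) ∈ K) ∧
  ∀ U ∈ K, ∀ B ∈ K, ∀ (f₀ : U ↪[L] M) (f₁ : U ↪[L] B),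
    ∃ g : B ↪[L] M, ∀ u : U, g (f₁ u) = f₀ u

/-- Γ-independence of countable substructures of `M`. -/
def GammaIndep (M : Type) [L.Structure M] (E A B : L.Substructure M) : Prop :=
  ∀ D' : L.Substructure M, Countable D' →
    ∀ (φA : A →[L] D') (φB : B →[L] D'),
      (∀ (x : M) (hA : x ∈ A) (hB : x ∈ B), x ∈ E → φA ⟨x, hA⟩ = φB ⟨x, hB⟩) →
      ∃! φ : ↥(A ⊔ B) →[L] D',
        (∀ (x : M) (h : x ∈ A), φ ⟨x, (le_sup_left : A ≤ A ⊔ B) h⟩ = φA ⟨x, h⟩) ∧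
        (∀ (x : M) (h : x ∈ B), φ ⟨x, (le_sup_right : B ≤ A ⊔ B) h⟩ = φB ⟨x, h⟩)

/-- M-independence: forcing base monotonicity on algebraic independence. -/
def MIndep (M : Type) [L.Structure M] (E A B : L.Substructure M) : Prop :=
  ∀ C : L.Substructure M, E ≤ C → C ≤ B → (A ⊔ C) ⊓ B = C


variable {L} in
lemma invar {K : Set (Bundled.{0} L.Structure)} {M : Type} [L.Structure M]
    (hL : Countable L.Symbols) (hsm : SmallMembers L K) (hM : KSat L K M)
    {α : Type} : ∀ {n : ℕ} (φ : L.BoundedFormula α n) (U : Bundled.{0} L.Structure),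
      U ∈ K → ∀ (f g : U ↪[L] M) (v : α → U) (xs : Fin n → U),
      (φ.Realize (f ∘ v) (f ∘ xs) ↔ φ.Realize (g ∘ v) (g ∘ xs)) := by
  haveI := hL
  intro n φ
  induction φ with
  | falsum => intro U hU f g v xs; exact Iff.rfl
  | equal t₁ t₂ =>
    intro U hU f g v xs
    simp only [BoundedFormula.Realize, ← Sum.comp_elim, HomClass.realize_term,
      EmbeddingLike.apply_eq_iff_eq]
  | rel R ts =>
    intro U hU f g v xs
    simp only [BoundedFormula.Realize, ← Sum.comp_elim, HomClass.realize_term]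
    exact Iff.trans (StrongHomClass.map_rel f R _) (StrongHomClass.map_rel g R _).symm
  | imp φ₁ φ₂ ih₁ ih₂ =>
    intro U hU f g v xs
    simp only [BoundedFormula.realize_imp]
    exact imp_congr (ih₁ U hU f g v xs) (ih₂ U hU f g v xs)
  | all φ ih =>
    intro U hU f g v xs
    simp only [BoundedFormula.realize_all]
    have key : ∀ f g : U ↪[L] M,
        (∀ x : M, φ.Realize (f ∘ v) (Fin.snoc (f ∘ xs) x)) →
        ∀ x : M, φ.Realize (g ∘ v) (Fin.snoc (g ∘ xs) x) := by
      intro f g h m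
      haveI : Countable U := hsm U hU
      set U' : L.Substructure M := Substructure.closure L (Set.range g ∪ {m}) with hU'def
      haveI hcount : Countable ↥U' :=
        Set.Countable.substructure_closure L
          ((Set.countable_range g).union (Set.countable_singleton m))
      have hsub : ∀ u : U, g u ∈ U' :=
        fun u => Substructure.subset_closure (Set.mem_union_left _ ⟨u, rfl⟩)
      have hm : m ∈ U' := Substructure.subset_closure (Set.mem_union_right _ rfl)
      let UB : Bundled.{0} L.Structure := Bundled.of ↥U'
      have hUBK : UB ∈ K :=
        hM.1 U' (lt_of_le_of_lt (Cardinal.mk_le_aleph0_iff.mpr hcount)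
          Cardinal.aleph0_lt_aleph_one)
      let g' : U ↪[L] UB := FirstOrder.Language.Embedding.codRestrict U' g hsub
      obtain ⟨h', hh'⟩ := hM.2 U hU UB hUBK f g'
      let s : UB ↪[L] M := U'.subtype
      let mb : UB := ⟨m, hm⟩
      have e1 : (⇑h' ∘ ⇑g' : U → M) = ⇑f := funext fun u => hh' u
      have e2 : (⇑s ∘ ⇑g' : U → M) = ⇑g := funext fun u => rfl
      have e3 : s mb = m := rfl
      have hiff := ih UB hUBK h' s (⇑g' ∘ v) (Fin.snoc (⇑g' ∘ xs) mb)
      rw [Fin.comp_snoc, Fin.comp_snoc, ← Function.comp_assoc, ← Function.comp_assoc,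
        ← Function.comp_assoc, ← Function.comp_assoc, e1, e2, e3] at hiff
      exact hiff.mp (h (h' mb))
    exact ⟨key f g, key g f⟩


/-- Under (H), in a `K`-ℵ₁-saturated structure every element outside
the substructure generated by a countable set is not algebraic over it (so the
algebraic and definable closures coincide with the generated substructure). -/
theorem statement_6 (L : FirstOrder.Language.{0, 0}) (hL : Countable L.Symbols)
    (K : Set (Bundled.{0} L.Structure)) (hK : HypH L K)
    (M : Type) [L.Structure M] (hM : KSat L K M)
    (A : Set M) (hA : A.Countable)
    (c : M) (hc : c ∉ Substructure.closure L A)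
    (n : ℕ) (φ : L.Formula (Unit ⊕ Fin n)) (a : Fin n → M)
    (ha : ∀ i, a i ∈ Substructure.closure L A)
    (hφ : φ.Realize (Sum.elim (fun _ : Unit => c) a)) :
    {b : M | φ.Realize (Sum.elim (fun _ : Unit => b) a)}.Infinite := by
  haveI := hL
  have hKsub : ∀ S : L.Substructure M, Countable ↥S →
      (Bundled.of ↥S : Bundled L.Structure) ∈ K := fun S hS =>
    hM.1 S (lt_of_le_of_lt (Cardinal.mk_le_aleph0_iff.mpr hS)
      Cardinal.aleph0_lt_aleph_one)
  by_contra hinf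
  rw [Set.not_infinite] at hinf
  set S : Set M := {b : M | φ.Realize (Sum.elim (fun _ : Unit => b) a)} with hSdef
  have hSc : S.Countable := hinf.countable
  set E : L.Substructure M := Substructure.closure L A with hE
  set V : L.Substructure M := Substructure.closure L (A ∪ S) with hVdef
  set U : L.Substructure M := Substructure.closure L (A ∪ {c}) with hUdef
  haveI hEc : Countable ↥E := hA.substructure_closure L
  haveI hVc : Countable ↥V := (hA.union hSc).substructure_closure L
  haveI hUc : Countable ↥U := (hA.union (Set.countable_singleton c)).substructure_closure L
  have hEV : E ≤ V := Substructure.closure_mono Set.subset_union_left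
  have hEU : E ≤ U := Substructure.closure_mono Set.subset_union_left
  have hcU : c ∈ U := Substructure.subset_closure (Set.mem_union_right _ rfl)
  let EB : Bundled.{0} L.Structure := Bundled.of ↥E
  let VB : Bundled.{0} L.Structure := Bundled.of ↥V
  let UB : Bundled.{0} L.Structure := Bundled.of ↥U
  have hEK : EB ∈ K := hKsub E hEc
  have hVK : VB ∈ K := hKsub V hVc
  have hUK : UB ∈ K := hKsub U hUc
  let eV : EB ↪[L] VB := Substructure.inclusion hEV
  let eU : EB ↪[L] UB := Substructure.inclusion hEU
  obtain ⟨D, hD, iV, iU, hAg, hRange, -, -⟩ :=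
    hK.freeAmalg.2 EB VB UB hEK hVK hUK eV eU
  obtain ⟨g, hg⟩ := hM.2 VB hVK D hD V.subtype iV
  let su : UB ↪[L] M := U.subtype
  let cb : UB := ⟨c, hcU⟩
  let b : M := g (iU cb)
  have ab : ∀ i, a i ∈ U := fun i => hEU (ha i)
  let v : Unit ⊕ Fin n → UB := Sum.elim (fun _ => cb) (fun i => ⟨a i, ab i⟩)
  have hgiU : ∀ i : Fin n, g (iU ⟨a i, ab i⟩) = a i := by
    intro i
    have h1 : (⟨a i, ab i⟩ : UB) = eU ⟨a i, ha i⟩ := rfl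
    rw [h1, ← hAg ⟨a i, ha i⟩, hg]
    rfl
  have eL : (⇑(g.comp iU) ∘ v : (Unit ⊕ Fin n) → M) = Sum.elim (fun _ => b) a := by
    funext x
    cases x with
    | inl _ => rfl
    | inr i => exact hgiU i
  have eR : (⇑su ∘ v : (Unit ⊕ Fin n) → M) = Sum.elim (fun _ => c) a := by
    funext x
    cases x with
    | inl _ => rfl
    | inr i => rfl
  have hb : b ∈ S := by
    show φ.Realize (Sum.elim (fun _ : Unit => b) a)
    have key := invar hL hK.small hM (φ : L.BoundedFormula (Unit ⊕ Fin n) 0)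
      UB hUK (g.comp iU) su v default
    rw [eL, eR,
      Subsingleton.elim (⇑(g.comp iU) ∘ (default : Fin 0 → UB)) (default : Fin 0 → M),
      Subsingleton.elim (⇑su ∘ (default : Fin 0 → UB)) (default : Fin 0 → M)] at key
    exact key.mpr hφ
  have hbV : b ∈ V := Substructure.subset_closure (Set.mem_union_right _ hb)
  have hVU : iV ⟨b, hbV⟩ = iU cb := g.injective (by exact (hg ⟨b, hbV⟩).trans rfl)
  have hmem : iU cb ∈ Set.range iV ∩ Set.range iU := ⟨⟨⟨b, hbV⟩, hVU⟩, ⟨cb, rfl⟩⟩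
  rw [hRange] at hmem
  obtain ⟨e, he⟩ := hmem
  have heq : eU e = cb := iU.injective (by rw [← hAg e]; exact he)
  have hcE : c ∈ E := by
    have h5 : (Subtype.val : ↥U → M) (eU e) = (Subtype.val : ↥U → M) cb :=
      congrArg _ heq
    have h6 : (Subtype.val : ↥U → M) (eU e) = (Subtype.val : ↥E → M) (e : ↥E) := rfl
    have h7 : (Subtype.val : ↥U → M) cb = c := rfl
    rw [h6, h7] at h5
    rw [← h5]
    exact (e : ↥E).2
  exact hc hcE

end FraisseFreeAmalg
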